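/- For every integer r ≥ 2, define a_r = 2 if r is odd and a_r = 1 if r is even, and let n_r be the absolute value of the numerator (in lowest terms) of B_{2r}/(4r), where B_{2r} is the (2r)-th Bernoulli number. Then the positive integer a_r · 2^(2r−2) · (2^(2r−1) − 1) · n_r is divisible by 7 if and only if r is congruent to 2 modulo 3. -/

import Mathlib

open Finset

noncomputable section
namespace Stmt10Aux

instance fact7 : Fact (Nat.Prime 7) := ⟨by norm_num⟩

abbrev Q7 := ℚ_[7]

lemma choose_id {p i : ℕ} (h : i ≤ p) :
    (p + 1 - i) * (p + 1).choose i = (p + 1) * p.choose i := by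
  have h1 : p.choose (p - i) = p.choose i := Nat.choose_symm h
  have h2 := Nat.add_one_mul_choose_eq p (p - i)
  have h3 : (p + 1).choose (p - i + 1) = (p + 1).choose i := by
    have : p - i + 1 = (p + 1) - i := by omega
    rw [this, Nat.choose_symm (by omega)]
  rw [h1, h3] at h2
  rw [h2]
  have h4 : p - i + 1 = p + 1 - i := by omega
  rw [h4]
  ring

/-- Faulhaber in the "good" form. -/
lemma faulhaber' (n p : ℕ) : (∑ k ∈ range n, (k : ℚ) ^ p) =
    ∑ i ∈ range (p + 1),
      (p.choose i : ℚ) * bernoulli i * (n : ℚ) ^ (p + 1 - i) / ((p + 1 - i : ℕ) : ℚ) := by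
  rw [sum_range_pow]
  refine sum_congr rfl fun i hi => ?_
  have hip : i ≤ p := by simpa using Nat.lt_succ_iff.mp (mem_range.mp hi)
  have hkey : ((p + 1 - i : ℕ) : ℚ) * ((p + 1).choose i : ℚ) = ((p+1 : ℕ) : ℚ) * (p.choose i : ℚ) := by
    exact_mod_cast congrArg (Nat.cast : ℕ → ℚ) (choose_id hip)
  have h1 : ((p + 1 - i : ℕ) : ℚ) ≠ 0 := by
    have : 0 < p + 1 - i := by omega
    exact_mod_cast this.ne'
  have h2 : ((p:ℚ) + 1) ≠ 0 := by positivity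
  rw [div_eq_div_iff h2 h1]
  push_cast at hkey ⊢
  linear_combination bernoulli i * (n:ℚ) ^ (p + 1 - i) * hkey


lemma norm_p_pow' (n : ℕ) : ‖((7 : Q7) ^ n)‖ = ((7:ℝ) ^ n)⁻¹ := by
  have h0 : (7 : Q7) = ((7:ℕ) : Q7) := by norm_num
  rw [h0, Padic.norm_p_pow (p := 7) n, zpow_neg, zpow_natCast]
  norm_num

lemma norm_int_unit {a : ℤ} (h : ¬ (7:ℤ) ∣ a) : ‖((a : ℤ) : Q7)‖ = 1 := by
  have h1 : ¬ ‖((a : ℤ) : Q7)‖ < 1 := fun hc => h (by exact_mod_cast (Padic.norm_intCast_lt_one_iff (k := a)).mp hc)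
  have h2 := Padic.norm_int_le_one (p := 7) a
  linarith

lemma norm_nat_unit {a : ℕ} (h : ¬ 7 ∣ a) : ‖((a : ℕ) : Q7)‖ = 1 := by
  have : ¬ (7:ℤ) ∣ (a : ℤ) := by exact_mod_cast h
  simpa using norm_int_unit this

lemma norm_nat_le_one (a : ℕ) : ‖((a : ℕ) : Q7)‖ ≤ 1 := by
  simpa using Padic.norm_int_le_one (p := 7) (a : ℤ)

/-- ‖k⁻¹‖ ≤ k for nonzero nat k -/
lemma norm_inv_nat_le {k : ℕ} (hk : k ≠ 0) : ‖((k : Q7))⁻¹‖ ≤ (k : ℝ) := by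
  set v := padicValNat 7 k with hv
  have hfact : 7 ^ v * (k / 7 ^ v) = k := Nat.ordProj_mul_ordCompl_eq_self k 7
  have hnd : ¬ 7 ∣ (k / 7 ^ v) := Nat.not_dvd_ordCompl (by norm_num) hk
  have hnorm : ‖((k : Q7))‖ = ((7:ℝ) ^ v)⁻¹ := by
    rw [← hfact]
    push_cast
    rw [norm_mul, norm_nat_unit hnd, mul_one, norm_p_pow']
  have hle : (7:ℕ) ^ v ≤ k := Nat.ordProj_le 7 hk
  rw [norm_inv, hnorm, inv_inv]
  exact_mod_cast hle

/-- bound for base integrality: ‖7^k / k‖ ≤ 1/7 for k ≥ 1 -/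
lemma bound1 {k : ℕ} (hk : 1 ≤ k) : ‖(7 : Q7) ^ k * ((k : Q7))⁻¹‖ ≤ (7:ℝ)⁻¹ := by
  rw [norm_mul, norm_p_pow']
  have h1 : ‖((k : Q7))⁻¹‖ ≤ (k : ℝ) := norm_inv_nat_le (by omega)
  have h2 : (k:ℝ) ≤ (7:ℝ) ^ (k - 1) := by
    have : k ≤ 7 ^ (k - 1) := by
      have := Nat.lt_pow_self (n := k - 1) (by norm_num : 1 < 7)
      omega
    exact_mod_cast this
  have h3 : ((7:ℝ) ^ k)⁻¹ * (k:ℝ) ≤ ((7:ℝ) ^ k)⁻¹ * (7:ℝ) ^ (k-1) := by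
    apply mul_le_mul_of_nonneg_left h2 (by positivity)
  have h4 : ((7:ℝ) ^ k)⁻¹ * (7:ℝ) ^ (k-1) = (7:ℝ)⁻¹ := by
    have hx : (7:ℝ) ^ k = (7:ℝ) ^ (k-1) * 7 := by
      rw [← pow_succ]
      congr 1
      omega
    rw [hx, mul_inv]
    have : ((7:ℝ) ^ (k-1)) ≠ 0 := by positivity
    field_simp
  calc ((7:ℝ) ^ k)⁻¹ * ‖((k : Q7))⁻¹‖ ≤ ((7:ℝ) ^ k)⁻¹ * (k:ℝ) :=
        mul_le_mul_of_nonneg_left h1 (by positivity)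
    _ ≤ (7:ℝ)⁻¹ := h4 ▸ h3

lemma le_pow_sub3 {k : ℕ} (hk : 7 ≤ k) : k ≤ 7 ^ (k - 3) := by
  obtain ⟨j, rfl⟩ : ∃ j, k = j + 7 := ⟨k - 7, by omega⟩
  clear hk
  induction j with
  | zero => norm_num
  | succ n ih =>
    have h1 : n + 7 - 3 + 1 ≤ n + 1 + 7 - 3 := by omega
    calc n + 1 + 7 ≤ 7 ^ (n + 7 - 3) + 1 := by omega
      _ ≤ 7 ^ (n + 7 - 3) * 7 := by nlinarith [Nat.one_le_two_pow (n := n + 4), pow_pos (by norm_num : 0 < 7) (n + 7 - 3)]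
      _ = 7 ^ (n + 7 - 3 + 1) := (pow_succ _ _).symm
      _ ≤ 7 ^ (n + 1 + 7 - 3) := Nat.pow_le_pow_right (by norm_num) h1

/-- bound for refined step: ‖7^(N*k)/k‖ ≤ 7^(-(2N+1)) for k ≥ 3, N ≥ 1 -/
lemma bound2 {k N : ℕ} (hk : 3 ≤ k) (hN : 1 ≤ N) :
    ‖(7 : Q7) ^ (N * k) * ((k : Q7))⁻¹‖ ≤ ((7:ℝ) ^ (2 * N))⁻¹ * (7:ℝ)⁻¹ := by
  rw [norm_mul, norm_p_pow']
  have hrhs : ((7:ℝ) ^ (2 * N))⁻¹ * (7:ℝ)⁻¹ = ((7:ℝ) ^ (2 * N + 1))⁻¹ := by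
    rw [← mul_inv, ← pow_succ]
  rw [hrhs]
  by_cases h7 : 7 ∣ k
  · -- k >= 7, use ‖k⁻¹‖ ≤ k and k ≤ 7^(N*k - 2N - 1)
    have hk7 : 7 ≤ k := Nat.le_of_dvd (by omega) h7
    have h1 : ‖((k : Q7))⁻¹‖ ≤ (k : ℝ) := norm_inv_nat_le (by omega)
    have h2 : k * 7 ^ (2 * N + 1) ≤ 7 ^ (N * k) := by
      have e1 : k ≤ 7 ^ (k - 3) := le_pow_sub3 hk7
      have e2 : k - 3 + (2 * N + 1) ≤ N * k := by
        obtain ⟨N', rfl⟩ : ∃ N', N = N' + 1 := ⟨N - 1, by omega⟩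
        obtain ⟨k', rfl⟩ : ∃ k', k = k' + 7 := ⟨k - 7, by omega⟩
        have hP : (N'+1) * (k'+7) = N'*k' + 7*N' + k' + 7 := by ring
        omega
      calc k * 7 ^ (2 * N + 1) ≤ 7 ^ (k - 3) * 7 ^ (2 * N + 1) := Nat.mul_le_mul_right _ e1
        _ = 7 ^ (k - 3 + (2 * N + 1)) := (pow_add _ _ _).symm
        _ ≤ 7 ^ (N * k) := Nat.pow_le_pow_right (by norm_num) e2
    have h2' : (k : ℝ) * 7 ^ (2 * N + 1) ≤ 7 ^ (N * k) := by exact_mod_cast h2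
    calc ((7:ℝ) ^ (N * k))⁻¹ * ‖((k : Q7))⁻¹‖ ≤ ((7:ℝ) ^ (N * k))⁻¹ * (k : ℝ) :=
          mul_le_mul_of_nonneg_left h1 (by positivity)
      _ ≤ ((7:ℝ) ^ (2 * N + 1))⁻¹ := by
          rw [mul_comm, ← div_eq_mul_inv, div_le_iff₀ (by positivity), inv_mul_eq_div,
            le_div_iff₀ (by positivity)]
          linarith
  · have h1 : ‖((k : Q7))⁻¹‖ = 1 := by rw [norm_inv, norm_nat_unit h7, inv_one]
    rw [h1, mul_one]
    have h2 : 2 * N + 1 ≤ N * k := by nlinarith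
    have := pow_le_pow_right₀ (by norm_num : (1:ℝ) ≤ 7) h2
    exact inv_anti₀ (by positivity) this

lemma norm_sum_le_of_le {ι : Type*} {s : Finset ι} {f : ι → Q7} {C : ℝ} (hC : 0 ≤ C)
    (h : ∀ i ∈ s, ‖f i‖ ≤ C) : ‖∑ i ∈ s, f i‖ ≤ C := by
  classical
  induction s using Finset.induction_on with
  | empty => simpa using hC
  | @insert a s' hx ih =>
    rw [Finset.sum_insert hx]
    calc ‖f a + ∑ i ∈ s', f i‖ ≤ max ‖f a‖ ‖∑ i ∈ s', f i‖ := Padic.nonarchimedean _ _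
      _ ≤ C := max_le (h a (Finset.mem_insert_self _ _))
          (ih fun i hi => h i (Finset.mem_insert_of_mem hi))

lemma bernoulli_odd_zero {i : ℕ} (hodd : Odd i) (hi : 3 ≤ i) : bernoulli i = 0 := by
  rw [bernoulli_eq_bernoulli'_of_ne_one (by omega)]
  exact bernoulli'_eq_zero_of_odd hodd (by omega)

/-- Base integrality: ‖B_m‖₇ ≤ 7 for all m. -/
lemma bern_norm_le : ∀ m : ℕ, ‖((bernoulli m : ℚ) : Q7)‖ ≤ 7 := by
  intro m
  induction m using Nat.strong_induction_on with
  | _ m ih =>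
    have hf := faulhaber' 7 m
    rw [Finset.sum_range_succ
      (fun i => (m.choose i : ℚ) * bernoulli i * ((7:ℕ) : ℚ) ^ (m + 1 - i) / ((m + 1 - i : ℕ) : ℚ)) m] at hf
    have hmm : m + 1 - m = 1 := by omega
    rw [hmm] at hf
    simp only [Nat.choose_self, Nat.cast_one, one_mul, pow_one, Nat.cast_ofNat] at hf
    -- hf : sum = sum_{i<m} t i + bernoulli m * 7 / 1
    have h7 : (bernoulli m : ℚ) * 7 =
        (∑ k ∈ range 7, (k : ℚ) ^ m) -
        ∑ i ∈ range m, (m.choose i : ℚ) * bernoulli i * ((7:ℕ):ℚ) ^ (m + 1 - i) / ((m + 1 - i : ℕ) : ℚ) := by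
      rw [hf]; push_cast; ring
    have hnorm : ‖((bernoulli m * 7 : ℚ) : Q7)‖ ≤ 1 := by
      rw [h7]
      push_cast
      rw [sub_eq_add_neg]
      refine le_trans (Padic.nonarchimedean _ _) (max_le ?_ ?_)
      · apply norm_sum_le_of_le zero_le_one
        intro k _
        calc ‖((k:ℕ) : Q7) ^ m‖ = ‖((k:ℕ) : Q7)‖ ^ m := norm_pow _ _
          _ ≤ 1 := pow_le_one₀ (norm_nonneg _) (norm_nat_le_one k)
      · rw [norm_neg]
        apply norm_sum_le_of_le zero_le_one
        intro i hi
        have him : i < m := Finset.mem_range.mp hi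
        have hk1 : 1 ≤ m + 1 - i := by omega
        have hkne : ((m + 1 - i : ℕ) : Q7) ≠ 0 := Nat.cast_ne_zero.mpr (by omega)
        rw [div_eq_mul_inv, norm_mul, norm_mul, norm_mul]
        calc ‖((m.choose i : ℕ) : Q7)‖ * ‖((bernoulli i : ℚ) : Q7)‖ * ‖(7 : Q7) ^ (m+1-i)‖ *
              ‖(((m+1-i : ℕ) : Q7))⁻¹‖
            ≤ 1 * 7 * (‖(7 : Q7) ^ (m+1-i)‖ * ‖(((m+1-i : ℕ) : Q7))⁻¹‖) := by
              rw [mul_assoc]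
              apply mul_le_mul_of_nonneg_right _ (by positivity)
              exact mul_le_mul (norm_nat_le_one _) (ih i him) (norm_nonneg _) zero_le_one
          _ ≤ 1 * 7 * (7:ℝ)⁻¹ := by
              apply mul_le_mul_of_nonneg_left _ (by norm_num)
              rw [← norm_mul]
              exact bound1 hk1
          _ = 1 := by norm_num
    have hn7 : ‖(7 : Q7)‖ = (7:ℝ)⁻¹ := by
      have := norm_p_pow' 1
      simpa using this
    have : ‖((bernoulli m * 7 : ℚ) : Q7)‖ = ‖((bernoulli m : ℚ) : Q7)‖ * (7:ℝ)⁻¹ := by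
      push_cast
      rw [norm_mul, hn7]
    rw [this] at hnorm
    calc ‖((bernoulli m : ℚ) : Q7)‖ = (‖((bernoulli m : ℚ) : Q7)‖ * (7:ℝ)⁻¹) * 7 := by ring
      _ ≤ 1 * 7 := by apply mul_le_mul_of_nonneg_right hnorm (by norm_num)
      _ = 7 := by norm_num

def S (m n : ℕ) : ℤ := ∑ a ∈ range n, (a : ℤ) ^ m

def W (s n : ℕ) : ℤ := ∑ a ∈ range n, (a : ℤ) ^ s * ((3 * a) / n : ℕ)

lemma S_cast_rat (m n : ℕ) : ((S m n : ℤ) : ℚ) = ∑ k ∈ range n, (k : ℚ) ^ m := by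
  unfold S; push_cast; rfl

lemma norm_two_inv : ‖((2 : Q7))⁻¹‖ = 1 := by
  rw [norm_inv, show ((2:Q7)) = ((2:ℤ) : Q7) by norm_num,
    norm_int_unit (by norm_num), inv_one]

lemma key2 {m N : ℕ} (hme : Even m) (hm2 : 2 ≤ m) (hN : 1 ≤ N) :
    ‖((S m (7^N) : ℤ) : Q7) - (7 : Q7)^N * ((bernoulli m : ℚ) : Q7)‖ ≤ ((7:ℝ)^(2*N))⁻¹ := by
  have hf := faulhaber' (7^N) m
  rw [Finset.sum_range_succ
    (fun i => (m.choose i : ℚ) * bernoulli i * ((7^N:ℕ) : ℚ) ^ (m + 1 - i) / ((m + 1 - i : ℕ) : ℚ)) m] at hf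
  have hmm : m + 1 - m = 1 := by omega
  rw [hmm] at hf
  simp only [Nat.choose_self, Nat.cast_one, one_mul, pow_one] at hf
  have hQ : ((S m (7^N) : ℤ) : ℚ) - ((7^N : ℕ) : ℚ) * (bernoulli m : ℚ)
      = ∑ i ∈ range m,
        (m.choose i : ℚ) * bernoulli i * ((7^N:ℕ):ℚ) ^ (m + 1 - i) / ((m + 1 - i : ℕ) : ℚ) := by
    rw [S_cast_rat, hf]; push_cast; ring
  have hgoal : ((S m (7^N) : ℤ) : Q7) - (7 : Q7)^N * ((bernoulli m : ℚ) : Q7)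
      = ∑ i ∈ range m,
        (((m.choose i : ℚ) * bernoulli i * ((7^N:ℕ):ℚ) ^ (m + 1 - i) / ((m + 1 - i : ℕ) : ℚ) : ℚ) : Q7) := by
    rw [← Rat.cast_sum, ← hQ]
    push_cast
    ring
  rw [hgoal]
  apply norm_sum_le_of_le (by positivity)
  intro i hi
  have him : i < m := Finset.mem_range.mp hi
  by_cases hodd : Odd i
  · by_cases hi1 : i = 1
    · subst hi1
      have hmne : ((m : ℕ) : ℚ) ≠ 0 := Nat.cast_ne_zero.mpr (by omega)
      have hval : ((m.choose 1 : ℚ) * bernoulli 1 * ((7^N:ℕ):ℚ) ^ (m + 1 - 1) / ((m + 1 - 1 : ℕ) : ℚ) : ℚ)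
          = -(((7^N:ℕ):ℚ) ^ m) * (2:ℚ)⁻¹ := by
        have h1 : m + 1 - 1 = m := by omega
        rw [h1, Nat.choose_one_right, bernoulli_one]
        field_simp
      rw [hval]
      push_cast
      rw [norm_mul, norm_neg, norm_inv]
      have h2 : ‖((2 : Q7))‖ = 1 := by
        rw [show ((2:Q7)) = ((2:ℤ) : Q7) by norm_num, norm_int_unit (by norm_num)]
      rw [h2, inv_one, mul_one, ← pow_mul, norm_p_pow']
      apply inv_anti₀ (by positivity)
      apply pow_le_pow_right₀ (by norm_num)
      nlinarith
    · -- odd i ≥ 3 : bernoulli i = 0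
      have : bernoulli i = 0 := bernoulli_odd_zero hodd (by
        rcases hodd with ⟨t, ht⟩; omega)
      simp [this]
  · -- even i
    have hieven : i % 2 = 0 := Nat.even_iff.mp (Nat.not_odd_iff_even.mp hodd)
    have hmeven : m % 2 = 0 := Nat.even_iff.mp hme
    have hk3 : 3 ≤ m + 1 - i := by omega
    have hkpos : m + 1 - i ≠ 0 := by omega
    push_cast
    rw [div_eq_mul_inv, norm_mul, norm_mul, norm_mul, ← pow_mul]
    have hb : ‖((bernoulli i : ℚ) : Q7)‖ ≤ 7 := bern_norm_le i
    have hc : ‖((m.choose i : ℕ) : Q7)‖ ≤ 1 := norm_nat_le_one _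
    have hbd : ‖(7 : Q7) ^ (N * (m + 1 - i))‖ * ‖(((m + 1 - i : ℕ) : Q7))⁻¹‖
        ≤ ((7:ℝ) ^ (2*N))⁻¹ * (7:ℝ)⁻¹ := by
      rw [← norm_mul]
      exact bound2 hk3 hN
    calc ‖((m.choose i : ℕ) : Q7)‖ * ‖((bernoulli i : ℚ) : Q7)‖ * ‖(7 : Q7) ^ (N * (m + 1 - i))‖ *
          ‖(((m + 1 - i : ℕ) : Q7))⁻¹‖
        ≤ 1 * 7 * (((7:ℝ) ^ (2*N))⁻¹ * (7:ℝ)⁻¹) := by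
          rw [mul_assoc]
          apply mul_le_mul _ hbd (by positivity) (by norm_num)
          exact mul_le_mul hc hb (norm_nonneg _) zero_le_one
      _ = ((7:ℝ) ^ (2*N))⁻¹ := by
          have : (7:ℝ) ≠ 0 := by norm_num
          field_simp

lemma binom_approx (x y : ℤ) : ∀ m : ℕ, ∃ t : ℤ,
    (x + y) ^ (m + 1) = x ^ (m + 1) + (m + 1) * x ^ m * y + y ^ 2 * t := by
  intro m
  induction m with
  | zero => exact ⟨0, by ring⟩
  | succ n ih =>
    obtain ⟨t, ht⟩ := ih
    refine ⟨x * t + (n + 1) * x ^ n + y * t, ?_⟩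
    have h : (x + y) ^ (n + 1 + 1) = (x + y) * (x + y) ^ (n + 1) := by ring
    rw [h, ht]
    push_cast
    ring

lemma seven_pow_mod3 (N : ℕ) : 7 ^ N % 3 = 1 := by
  induction N with
  | zero => rfl
  | succ k ihk => rw [pow_succ, Nat.mul_mod, ihk]

/-- multiplying by 3 and reducing mod 7^N permutes range (7^N) -/
lemma sum_mul_three_mod (N : ℕ) (F : ℕ → ℤ) :
    ∑ a ∈ range (7 ^ N), F (3 * a % 7 ^ N) = ∑ a ∈ range (7 ^ N), F a := by
  have hnpos : 0 < 7 ^ N := pow_pos (by norm_num) N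
  have h3 : 3 ∣ 2 * 7 ^ N + 1 := by
    have h7 := seven_pow_mod3 N
    omega
  obtain ⟨c, hc3⟩ : ∃ c, 3 * c = 2 * 7 ^ N + 1 := ⟨_, Nat.mul_div_cancel' h3⟩
  set n := 7 ^ N with hn
  have hcc : ∀ x : ℕ, (3 * (c * x)) % n = x % n := by
    intro x
    have h1 : 3 * (c * x) = x + (2 * x) * n := by
      have h2 : 3 * (c * x) = (3 * c) * x := by ring
      rw [h2, hc3, hn]; ring
    rw [h1, Nat.add_mul_mod_self_right]
  apply Finset.sum_nbij' (fun a => 3 * a % n) (fun b => c * b % n)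
  · intro a _; exact mem_range.mpr (Nat.mod_lt _ hnpos)
  · intro a _; exact mem_range.mpr (Nat.mod_lt _ hnpos)
  · intro a ha
    have ha' : a < n := mem_range.mp ha
    have h1 : c * (3 * a % n) % n = c * (3 * a) % n := by
      rw [Nat.mul_mod, Nat.mod_mod_of_dvd, ← Nat.mul_mod]
      exact dvd_refl n
    have h2 : c * (3 * a) = 3 * (c * a) := by ring
    rw [h1, h2, hcc, Nat.mod_eq_of_lt ha']
  · intro b hb
    have hb' : b < n := mem_range.mp hb
    have h1 : 3 * (c * b % n) % n = 3 * (c * b) % n := by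
      rw [Nat.mul_mod, Nat.mod_mod_of_dvd, ← Nat.mul_mod]
      exact dvd_refl n
    rw [h1, hcc, Nat.mod_eq_of_lt hb']
  · intro a _; rfl

lemma voronoi (m N : ℕ) (hm : 1 ≤ m) : ∃ T : ℤ,
    ((3:ℤ) ^ m - 1) * S m (7 ^ N) =
      m * 3 ^ (m - 1) * 7 ^ N * W (m - 1) (7 ^ N) + ((7:ℤ) ^ N) ^ 2 * T := by
  obtain ⟨s, rfl⟩ : ∃ s, m = s + 1 := ⟨m - 1, by omega⟩
  have hpt : ∀ a : ℕ, ∃ t : ℤ,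
      ((3 * a % 7 ^ N : ℕ) : ℤ) ^ (s + 1) =
        (3:ℤ)^(s+1) * (a:ℤ)^(s+1)
          - (s+1) * 3^s * (a:ℤ)^s * ((7^N : ℕ):ℤ) * ((3 * a / 7 ^ N : ℕ) : ℤ)
          + (((7^N : ℕ):ℤ))^2 * t := by
    intro a
    have hdm : ((7^N : ℕ):ℤ) * ((3 * a / 7 ^ N : ℕ) : ℤ) + ((3 * a % 7 ^ N : ℕ) : ℤ) = 3 * (a:ℤ) := by
      exact_mod_cast congrArg (Nat.cast : ℕ → ℤ) (Nat.div_add_mod (3 * a) (7 ^ N))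
    obtain ⟨t, ht⟩ := binom_approx (3 * (a:ℤ)) (-(((7^N : ℕ):ℤ) * ((3 * a / 7 ^ N : ℕ) : ℤ))) s
    refine ⟨(((3 * a / 7 ^ N : ℕ) : ℤ))^2 * t, ?_⟩
    have hr : ((3 * a % 7 ^ N : ℕ) : ℤ)
        = 3 * (a:ℤ) + -(((7^N : ℕ):ℤ) * ((3 * a / 7 ^ N : ℕ) : ℤ)) := by linarith
    rw [hr, ht]
    push_cast
    ring
  choose t ht using hpt
  refine ⟨-∑ a ∈ range (7^N), t a, ?_⟩
  have hperm : ∑ a ∈ range (7^N), ((3 * a % 7^N : ℕ) : ℤ) ^ (s + 1) = S (s + 1) (7^N) :=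
    sum_mul_three_mod N (fun b => ((b:ℕ) : ℤ) ^ (s + 1))
  have hexp : ∑ a ∈ range (7^N), ((3 * a % 7^N : ℕ) : ℤ) ^ (s + 1)
      = (3:ℤ)^(s+1) * S (s+1) (7^N) - (s+1) * 3^s * ((7^N:ℕ):ℤ) * W s (7^N)
        + (((7^N:ℕ):ℤ))^2 * ∑ a ∈ range (7^N), t a := by
    rw [Finset.sum_congr rfl (fun a _ => ht a)]
    unfold S W
    rw [Finset.mul_sum, Finset.mul_sum, Finset.mul_sum, ← Finset.sum_sub_distrib,
      ← Finset.sum_add_distrib]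
    exact Finset.sum_congr rfl fun a _ => by push_cast; ring
  have hkey : S (s+1) (7^N) = (3:ℤ)^(s+1) * S (s+1) (7^N) - (s+1) * 3^s * ((7^N:ℕ):ℤ) * W s (7^N)
        + (((7^N:ℕ):ℤ))^2 * ∑ a ∈ range (7^N), t a := by rw [← hexp, hperm]
  have hmm : s + 1 - 1 = s := by omega
  rw [hmm]
  have hcast : ((7^N:ℕ):ℤ) = (7:ℤ)^N := by push_cast; ring
  rw [hcast] at hkey
  push_cast
  linear_combination (-1 : ℤ) * hkey

lemma norm_nat_eq (k : ℕ) (hk : k ≠ 0) : ‖((k : ℕ) : Q7)‖ = ((7:ℝ) ^ (padicValNat 7 k))⁻¹ := by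
  set v := padicValNat 7 k with hv
  have hfact : 7 ^ v * (k / 7 ^ v) = k := Nat.ordProj_mul_ordCompl_eq_self k 7
  have hnd : ¬ 7 ∣ (k / 7 ^ v) := Nat.not_dvd_ordCompl (by norm_num) hk
  rw [← hfact]
  push_cast
  rw [norm_mul, norm_nat_unit hnd, mul_one, norm_p_pow']

lemma zmod_pow_period {x : ZMod 7} {s s' : ℕ} (hs : 1 ≤ s) (hs' : 1 ≤ s') (h : s % 6 = s' % 6) :
    x ^ s = x ^ s' := by
  by_cases hx : x = 0
  · subst hx; rw [zero_pow (by omega), zero_pow (by omega)]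
  · have h6 : x ^ 6 = 1 := ZMod.pow_card_sub_one_eq_one hx
    conv_lhs => rw [← Nat.div_add_mod s 6]
    conv_rhs => rw [← Nat.div_add_mod s' 6]
    rw [pow_add, pow_add, pow_mul, pow_mul, h6, one_pow, one_pow, h]

lemma W_period {s s' N : ℕ} (hs : 1 ≤ s) (hs' : 1 ≤ s') (h : s % 6 = s' % 6) :
    ((W s (7^N) : ℤ) : ZMod 7) = ((W s' (7^N) : ℤ) : ZMod 7) := by
  unfold W
  push_cast
  refine Finset.sum_congr rfl fun a _ => ?_
  congr 1
  exact zmod_pow_period hs hs' h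

lemma norm_bern_two : ‖((bernoulli 2 : ℚ) : Q7)‖ = 1 := by
  have hb : bernoulli 2 = 1/6 := by
    rw [bernoulli_eq_bernoulli'_of_ne_one (by norm_num), bernoulli'_two]
  rw [hb]
  push_cast
  rw [norm_div, norm_one, show ((6:Q7)) = ((6:ℤ) : Q7) by norm_num,
    norm_int_unit (by norm_num)]
  norm_num

lemma norm_bern_four : ‖((bernoulli 4 : ℚ) : Q7)‖ = 1 := by
  have hb : bernoulli 4 = -1/30 := by
    rw [bernoulli_eq_bernoulli'_of_ne_one (by norm_num), bernoulli'_four]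
  rw [hb]
  push_cast
  rw [norm_div, norm_neg, norm_one, show ((30:Q7)) = ((30:ℤ) : Q7) by norm_num,
    norm_int_unit (by norm_num)]
  norm_num

/-- norm of S m (7^N) when ‖bernoulli m‖ is known and `≥ 7^{-2N}`-dominating -/
lemma norm_S_eq {m N : ℕ} (hme : Even m) (hm2 : 2 ≤ m) (hN : 1 ≤ N) {b : ℝ}
    (hb : ‖((bernoulli m : ℚ) : Q7)‖ = b)
    (hgt : ((7:ℝ)^(2*N))⁻¹ < ((7:ℝ)^N)⁻¹ * b) :
    ‖((S m (7^N) : ℤ) : Q7)‖ = ((7:ℝ)^N)⁻¹ * b := by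
  have hk := key2 hme hm2 hN
  have h7 : ‖(7:Q7)^N * ((bernoulli m : ℚ) : Q7)‖ = ((7:ℝ)^N)⁻¹ * b := by
    rw [norm_mul, norm_p_pow', hb]
  have hne : ‖((S m (7^N) : ℤ) : Q7) - (7:Q7)^N * ((bernoulli m : ℚ) : Q7)‖
      ≠ ‖(7:Q7)^N * ((bernoulli m : ℚ) : Q7)‖ := by
    rw [h7]; exact ne_of_lt (lt_of_le_of_lt hk hgt)
  have := Padic.add_eq_max_of_ne hne
  rw [sub_add_cancel] at this
  rw [this, h7, max_eq_right (le_of_lt (lt_of_le_of_lt hk hgt))]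

lemma ref_W {m' : ℕ} (hm' : m' = 2 ∨ m' = 4) {N : ℕ} (hN : 1 ≤ N) :
    ¬ (7:ℤ) ∣ W (m' - 1) (7 ^ N) := by
  intro hdvd
  obtain ⟨T, hT⟩ := voronoi m' N (by rcases hm' with h | h <;> omega)
  have hme : Even m' := by rcases hm' with h | h <;> subst h <;> decide
  have hm2 : 2 ≤ m' := by rcases hm' with h | h <;> omega
  have hb : ‖((bernoulli m' : ℚ) : Q7)‖ = 1 := by
    rcases hm' with h | h <;> subst h
    · exact norm_bern_two
    · exact norm_bern_four
  have hgt : ((7:ℝ)^(2*N))⁻¹ < ((7:ℝ)^N)⁻¹ * 1 := by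
    rw [mul_one]
    apply inv_strictAnti₀ (by positivity)
    apply pow_lt_pow_right₀ (by norm_num)
    omega
  have hS : ‖((S m' (7^N) : ℤ) : Q7)‖ = ((7:ℝ)^N)⁻¹ * 1 := norm_S_eq hme hm2 hN hb hgt
  have h3 : ‖(((3:ℤ)^m' - 1 : ℤ) : Q7)‖ = 1 := by
    apply norm_int_unit
    rcases hm' with h | h <;> subst h <;> decide
  -- cast hT to Q7
  have hTQ : ((((3:ℤ)^m' - 1) * S m' (7^N) : ℤ) : Q7)
      = ((m' * 3^(m'-1) * 7^N * W (m'-1) (7^N) : ℤ) : Q7) + ((((7:ℤ)^N)^2 * T : ℤ) : Q7) := by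
    rw [← Int.cast_add, ← hT]
  have hLHS : ‖((((3:ℤ)^m' - 1) * S m' (7^N) : ℤ) : Q7)‖ = ((7:ℝ)^N)⁻¹ := by
    push_cast
    rw [norm_mul]
    push_cast at h3 hS
    rw [h3, hS]
    norm_num
  have hX : ‖((m' * 3^(m'-1) * 7^N * W (m'-1) (7^N) : ℤ) : Q7)‖ ≤ ((7:ℝ)^(N+1))⁻¹ := by
    push_cast
    rw [norm_mul, norm_mul, norm_mul]
    have h1 : ‖((m' : ℕ) : Q7)‖ ≤ 1 := norm_nat_le_one _
    have h2 : ‖((3:Q7))^(m'-1)‖ ≤ 1 := by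
      rw [norm_pow]
      apply pow_le_one₀ (norm_nonneg _)
      rw [show ((3:Q7)) = ((3:ℤ) : Q7) by norm_num]
      exact Padic.norm_int_le_one _
    have h3' : ‖(7:Q7)^N‖ = ((7:ℝ)^N)⁻¹ := norm_p_pow'  N
    have h4 : ‖((W (m'-1) (7^N) : ℤ) : Q7)‖ ≤ (7:ℝ)⁻¹ := by
      have := (Padic.norm_int_le_pow_iff_dvd (p := 7) (W (m'-1) (7^N)) 1).mpr (by simpa using hdvd)
      simpa using this
    calc ‖((m' : ℕ) : Q7)‖ * ‖((3:Q7))^(m'-1)‖ * ‖(7:Q7)^N‖ * ‖((W (m'-1) (7^N) : ℤ) : Q7)‖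
        ≤ 1 * 1 * (((7:ℝ)^N)⁻¹) * (7:ℝ)⁻¹ := by
          apply mul_le_mul _ h4 (norm_nonneg _) (by positivity)
          rw [h3']
          apply mul_le_mul _ le_rfl (by positivity) (by norm_num)
          exact mul_le_mul h1 h2 (norm_nonneg _) zero_le_one
      _ = ((7:ℝ)^(N+1))⁻¹ := by rw [pow_succ, mul_inv]; ring
  have hY : ‖(((((7:ℤ)^N)^2 * T : ℤ)) : Q7)‖ ≤ ((7:ℝ)^(N+1))⁻¹ := by
    push_cast
    rw [norm_mul, ← pow_mul]
    have h1 : ‖(7:Q7)^(N*2)‖ = ((7:ℝ)^(N*2))⁻¹ := norm_p_pow' _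
    have h2 : ‖((T : ℤ) : Q7)‖ ≤ 1 := Padic.norm_int_le_one _
    calc ‖(7:Q7)^(N*2)‖ * ‖((T : ℤ) : Q7)‖ ≤ ((7:ℝ)^(N*2))⁻¹ * 1 := by
          rw [h1]
          apply mul_le_mul_of_nonneg_left h2 (by positivity)
      _ ≤ ((7:ℝ)^(N+1))⁻¹ := by
          rw [mul_one]
          apply inv_anti₀ (by positivity)
          apply pow_le_pow_right₀ (by norm_num)
          omega
  have hcontr : ((7:ℝ)^N)⁻¹ ≤ ((7:ℝ)^(N+1))⁻¹ := by
    rw [← hLHS, hTQ]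
    exact le_trans (Padic.nonarchimedean _ _) (max_le hX hY)
  have : ((7:ℝ)^(N+1))⁻¹ < ((7:ℝ)^N)⁻¹ := by
    apply inv_strictAnti₀ (by positivity)
    apply pow_lt_pow_right₀ (by norm_num)
    omega
  linarith

lemma norm_three_pow (j : ℕ) : ‖((3:Q7))^j‖ = 1 := by
  rw [norm_pow, show ((3:Q7)) = ((3:ℤ) : Q7) by norm_num, norm_int_unit (by norm_num), one_pow]

/-- Kummer-type theorem: for even m ≥ 4 with m % 6 ∈ {2,4}, ‖B_m‖₇ = ‖m‖₇. -/
lemma bern_norm_main {m : ℕ} (hme : Even m) (hm4 : 4 ≤ m) (hmod : m % 6 = 2 ∨ m % 6 = 4) :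
    ‖((bernoulli m : ℚ) : Q7)‖ = ‖((m : ℕ) : Q7)‖ := by
  set v := padicValNat 7 m with hv
  set N := v + 1 with hN
  have hN1 : 1 ≤ N := by omega
  have hm0 : m ≠ 0 := by omega
  have hnm : ‖((m : ℕ) : Q7)‖ = ((7:ℝ)^v)⁻¹ := norm_nat_eq m hm0
  -- W is a 7-adic unit
  have hW : ¬ (7:ℤ) ∣ W (m - 1) (7^N) := by
    intro hdvd
    have hz : ((W (m-1) (7^N) : ℤ) : ZMod 7) = 0 :=
      (ZMod.intCast_zmod_eq_zero_iff_dvd _ 7).mpr (by exact_mod_cast hdvd)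
    rcases hmod with h | h
    · have hper : ((W (m-1) (7^N) : ℤ) : ZMod 7) = ((W (2-1) (7^N) : ℤ) : ZMod 7) :=
        W_period (by omega) (by omega) (by omega)
      rw [hper] at hz
      exact ref_W (Or.inl rfl) hN1 (by exact_mod_cast (ZMod.intCast_zmod_eq_zero_iff_dvd _ 7).mp hz)
    · have hper : ((W (m-1) (7^N) : ℤ) : ZMod 7) = ((W (4-1) (7^N) : ℤ) : ZMod 7) :=
        W_period (by omega) (by omega) (by omega)
      rw [hper] at hz
      exact ref_W (Or.inr rfl) hN1 (by exact_mod_cast (ZMod.intCast_zmod_eq_zero_iff_dvd _ 7).mp hz)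
  have hWn : ‖((W (m-1) (7^N) : ℤ) : Q7)‖ = 1 := norm_int_unit hW
  -- 3^m - 1 is a 7-adic unit
  have h3 : ‖(((3:ℤ)^m - 1 : ℤ) : Q7)‖ = 1 := by
    apply norm_int_unit
    intro hdvd
    have hz : (((3:ℤ)^m - 1 : ℤ) : ZMod 7) = 0 :=
      (ZMod.intCast_zmod_eq_zero_iff_dvd _ 7).mpr (by exact_mod_cast hdvd)
    push_cast at hz
    have h16 : 1 ≤ m % 6 := by rcases hmod with h | h <;> omega
    have hper : ((3 : ZMod 7))^m = ((3:ZMod 7))^(m % 6) :=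
      zmod_pow_period (by omega) h16 (by omega)
    rw [hper] at hz
    rcases hmod with h | h <;> rw [h] at hz <;> revert hz <;> decide
  -- norm of m as a natural number
  obtain ⟨c, hc, hcd⟩ : ∃ c, m = 7^v * c ∧ ¬ 7 ∣ c :=
    ⟨m / 7^v, (Nat.ordProj_mul_ordCompl_eq_self m 7).symm, Nat.not_dvd_ordCompl (by norm_num) hm0⟩
  -- Voronoi
  obtain ⟨T, hT⟩ := voronoi m N (by omega)
  have hTQ : ((((3:ℤ)^m - 1) * S m (7^N) : ℤ) : Q7)
      = ((m * 3^(m-1) * 7^N * W (m-1) (7^N) : ℤ) : Q7) + ((((7:ℤ)^N)^2 * T : ℤ) : Q7) := by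
    rw [← Int.cast_add, ← hT]
  have hXnorm : ‖((m * 3^(m-1) * 7^N * W (m-1) (7^N) : ℤ) : Q7)‖ = ((7:ℝ)^(2*v+1))⁻¹ := by
    push_cast
    rw [norm_mul, norm_mul, norm_mul]
    push_cast at hWn
    rw [hWn, norm_three_pow, norm_p_pow']
    have hmn : ‖((m : ℕ) : Q7)‖ = ((7:ℝ)^v)⁻¹ := hnm
    push_cast at hmn
    rw [hmn]
    rw [mul_one, mul_one, ← mul_inv, ← pow_add]
    congr 2
    omega
  have hYnorm : ‖(((((7:ℤ)^N)^2 * T : ℤ)) : Q7)‖ ≤ ((7:ℝ)^(2*v+2))⁻¹ := by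
    push_cast
    rw [norm_mul, ← pow_mul]
    have h1 : ‖(7:Q7)^(N*2)‖ = ((7:ℝ)^(N*2))⁻¹ := norm_p_pow' _
    calc ‖(7:Q7)^(N*2)‖ * ‖((T : ℤ) : Q7)‖ ≤ ((7:ℝ)^(N*2))⁻¹ * 1 := by
          rw [h1]
          exact mul_le_mul_of_nonneg_left (Padic.norm_int_le_one _) (by positivity)
      _ = ((7:ℝ)^(2*v+2))⁻¹ := by rw [mul_one]; congr 2; omega
  have hlt : ((7:ℝ)^(2*v+2))⁻¹ < ((7:ℝ)^(2*v+1))⁻¹ := by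
    apply inv_strictAnti₀ (by positivity)
    apply pow_lt_pow_right₀ (by norm_num)
    omega
  have hYlt : ‖(((((7:ℤ)^N)^2 * T : ℤ)) : Q7)‖ < ((7:ℝ)^(2*v+1))⁻¹ := lt_of_le_of_lt hYnorm hlt
  have hRHS : ‖((m * 3^(m-1) * 7^N * W (m-1) (7^N) : ℤ) : Q7) + ((((7:ℤ)^N)^2 * T : ℤ) : Q7)‖
      = ((7:ℝ)^(2*v+1))⁻¹ := by
    rw [add_comm, Padic.add_eq_max_of_ne (by rw [hXnorm]; exact ne_of_lt hYlt), hXnorm]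
    exact max_eq_right (le_of_lt hYlt)
  have hSnorm : ‖((S m (7^N) : ℤ) : Q7)‖ = ((7:ℝ)^(2*v+1))⁻¹ := by
    have : ‖((((3:ℤ)^m - 1) * S m (7^N) : ℤ) : Q7)‖ = ((7:ℝ)^(2*v+1))⁻¹ := by
      rw [hTQ, hRHS]
    rw [Int.cast_mul, norm_mul, h3, one_mul] at this
    exact this
  -- now compare with 7^N * B_m via key2
  have hk := key2 hme (by omega) hN1
  have hdiff_lt : ‖((S m (7^N) : ℤ) : Q7) - (7:Q7)^N * ((bernoulli m : ℚ) : Q7)‖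
      < ‖((S m (7^N) : ℤ) : Q7)‖ := by
    rw [hSnorm]
    refine lt_of_le_of_lt hk ?_
    have : 2 * N = 2*v+2 := by omega
    rw [this]
    exact hlt
  have hBn : ‖(7:Q7)^N * ((bernoulli m : ℚ) : Q7)‖ = ((7:ℝ)^(2*v+1))⁻¹ := by
    have hne : ‖((S m (7^N) : ℤ) : Q7)‖
        ≠ ‖-(((S m (7^N) : ℤ) : Q7) - (7:Q7)^N * ((bernoulli m : ℚ) : Q7))‖ := by
      rw [norm_neg]; exact (ne_of_lt hdiff_lt).symm
    have heq : (7:Q7)^N * ((bernoulli m : ℚ) : Q7)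
        = ((S m (7^N) : ℤ) : Q7) + -(((S m (7^N) : ℤ) : Q7) - (7:Q7)^N * ((bernoulli m : ℚ) : Q7)) := by
      ring
    rw [heq, Padic.add_eq_max_of_ne hne, norm_neg, max_eq_left (le_of_lt hdiff_lt), hSnorm]
  rw [norm_mul, norm_p_pow'] at hBn
  have hBval : ‖((bernoulli m : ℚ) : Q7)‖ = (7:ℝ)^N * ((7:ℝ)^(2*v+1))⁻¹ := by
    rw [← hBn, ← mul_assoc, mul_inv_cancel₀ (by positivity : ((7:ℝ)^N) ≠ 0), one_mul]
  rw [hnm, hBval]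
  have hsplit : (7:ℝ)^(2*v+1) = (7:ℝ)^N * (7:ℝ)^v := by rw [← pow_add]; congr 1; omega
  rw [hsplit, mul_inv, ← mul_assoc, mul_inv_cancel₀ (by positivity : ((7:ℝ)^N) ≠ 0), one_mul]

lemma S7_unit {u : ℕ} (hu : u ≠ 0) : ((S (6 * u) 7 : ℤ) : ZMod 7) = 6 := by
  unfold S
  push_cast
  have hterm : ∀ a : ℕ, a < 7 → ((a : ZMod 7)) ^ (6 * u) = if a = 0 then 0 else 1 := by
    intro a ha
    have h6 : ((a : ZMod 7)) ^ 6 = if a = 0 then 0 else 1 := by interval_cases a <;> decide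
    rw [pow_mul, h6]
    by_cases h : a = 0 <;> simp [h, zero_pow hu]
  rw [Finset.sum_congr rfl (fun a ha => hterm a (mem_range.mp ha))]
  decide

/-- von Staudt-Clausen case: if 6 ∣ m, m ≠ 0, then ‖B_m‖₇ = 7. -/
lemma bern_norm_vs {m : ℕ} (hm6 : 6 ∣ m) (hm0 : m ≠ 0) :
    ‖((bernoulli m : ℚ) : Q7)‖ = 7 := by
  obtain ⟨u, rfl⟩ := hm6
  have hu : u ≠ 0 := by omega
  have hS1 : ‖((S (6*u) 7 : ℤ) : Q7)‖ = 1 := by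
    apply norm_int_unit
    intro hdvd
    have hz : ((S (6*u) 7 : ℤ) : ZMod 7) = 0 :=
      (ZMod.intCast_zmod_eq_zero_iff_dvd _ 7).mpr (by exact_mod_cast hdvd)
    rw [S7_unit hu] at hz
    revert hz
    decide
  have hk := key2 (m := 6*u) (N := 1) (by exact ⟨3*u, by ring⟩) (by omega) le_rfl
  rw [pow_one] at hk
  have hk' : ‖((S (6*u) 7 : ℤ) : Q7) - (7:Q7)^1 * ((bernoulli (6*u) : ℚ) : Q7)‖ < 1 := by
    refine lt_of_le_of_lt hk ?_
    norm_num
  have hne : ‖((S (6*u) 7 : ℤ) : Q7)‖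
      ≠ ‖-(((S (6*u) 7 : ℤ) : Q7) - (7:Q7)^1 * ((bernoulli (6*u) : ℚ) : Q7))‖ := by
    rw [norm_neg, hS1]
    exact (ne_of_lt hk').symm
  have heq : (7:Q7)^1 * ((bernoulli (6*u) : ℚ) : Q7)
      = ((S (6*u) 7 : ℤ) : Q7) + -(((S (6*u) 7 : ℤ) : Q7) - (7:Q7)^1 * ((bernoulli (6*u) : ℚ) : Q7)) := by
    ring
  have hBn : ‖(7:Q7)^1 * ((bernoulli (6*u) : ℚ) : Q7)‖ = 1 := by
    rw [heq, Padic.add_eq_max_of_ne hne, norm_neg, max_eq_left, hS1]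
    rw [hS1]
    exact le_of_lt hk'
  rw [norm_mul, norm_p_pow', pow_one] at hBn
  have : ‖((bernoulli (6*u) : ℚ) : Q7)‖ = 7 * 1 := by
    rw [← hBn, ← mul_assoc, mul_inv_cancel₀ (by norm_num : (7:ℝ) ≠ 0), one_mul]
  simpa using this

/-- if 7 divides the numerator then the 7-adic norm is ≤ 1/7 -/
lemma norm_le_of_dvd_num {q : ℚ} (h : (7:ℤ) ∣ q.num) : ‖((q : ℚ) : Q7)‖ ≤ (7:ℝ)⁻¹ := by
  by_cases hq : q = 0
  · subst hq; norm_num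
  · have hnum : ‖((q.num : ℤ) : Q7)‖ ≤ (7:ℝ)⁻¹ := by
      have := (Padic.norm_int_le_pow_iff_dvd (p := 7) q.num 1).mpr (by simpa using h)
      simpa using this
    have hden7 : ¬ 7 ∣ q.den := by
      intro hc
      have hco := q.reduced
      have h7n : 7 ∣ q.num.natAbs := by
        have := Int.natAbs_dvd_natAbs.mpr h
        simpa using this
      have h71 : (7:ℕ) ∣ 1 := hco ▸ Nat.dvd_gcd h7n hc
      omega
    have hden : ‖((q.den : ℕ) : Q7)‖ = 1 := norm_nat_unit hden7
    have hcast : ((q : ℚ) : Q7) = ((q.num : ℤ) : Q7) / ((q.den : ℕ) : Q7) := by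
      rw [Rat.cast_def]
    rw [hcast, norm_div, hden, div_one]
    exact hnum

/-- The key arithmetic fact: 7 never divides the numerator of B_{2r}/(4r). -/
lemma num_not_dvd {r : ℕ} (hr : 2 ≤ r) : ¬ (7 ∣ (bernoulli (2*r) / (4 * r : ℚ)).num.natAbs) := by
  intro h
  have hdvd : (7:ℤ) ∣ (bernoulli (2*r) / (4 * r : ℚ)).num := by
    have : (7:ℤ).natAbs ∣ ((bernoulli (2*r) / (4 * r : ℚ)).num).natAbs := by simpa using h
    exact Int.natAbs_dvd_natAbs.mp this
  have hle := norm_le_of_dvd_num hdvd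
  -- compute the norm from below
  have hrne : (r:ℚ) ≠ 0 := by exact_mod_cast (by omega : r ≠ 0)
  have hden_norm : ‖(((4 * r : ℚ)) : Q7)‖ = ‖((r : ℕ) : Q7)‖ := by
    push_cast
    rw [norm_mul, show ((4:Q7)) = ((4:ℤ) : Q7) by norm_num, norm_int_unit (by norm_num), one_mul]
  have hm_norm : ‖((2 * r : ℕ) : Q7)‖ = ‖((r : ℕ) : Q7)‖ := by
    push_cast
    rw [norm_mul, show ((2:Q7)) = ((2:ℤ) : Q7) by norm_num, norm_int_unit (by norm_num), one_mul]
  have hcast : ((bernoulli (2*r) / (4 * r : ℚ) : ℚ) : Q7)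
      = ((bernoulli (2*r) : ℚ) : Q7) / (((4 * r : ℚ)) : Q7) := by
    push_cast
    ring
  have hrpos : 0 < ‖((r : ℕ) : Q7)‖ := by
    rw [norm_pos_iff]
    exact_mod_cast (by omega : r ≠ 0)
  have hrle : ‖((r : ℕ) : Q7)‖ ≤ 1 := norm_nat_le_one r
  have hnorm_big : (7:ℝ)⁻¹ < ‖((bernoulli (2*r) / (4 * r : ℚ) : ℚ) : Q7)‖ := by
    rw [hcast, norm_div, hden_norm]
    rcases Nat.lt_or_ge (r % 3) 1 with h3 | h3
    · -- 3 ∣ r, von Staudt case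
      have h6 : 6 ∣ 2 * r := by omega
      have hB := bern_norm_vs h6 (by omega)
      rw [hB]
      have : (1:ℝ) ≤ 7 / ‖((r : ℕ) : Q7)‖ := by
        rw [le_div_iff₀ hrpos]
        linarith
      calc (7:ℝ)⁻¹ < 1 := by norm_num
        _ ≤ 7 / ‖((r : ℕ) : Q7)‖ := this
    · -- Kummer case
      have hmod : (2*r) % 6 = 2 ∨ (2*r) % 6 = 4 := by omega
      have hB := bern_norm_main (m := 2*r) ⟨r, by ring⟩ (by omega) hmod
      rw [hB, hm_norm, div_self (ne_of_gt hrpos)]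
      norm_num
  linarith

/-- 7 ∣ 2^(2r-1) - 1 ↔ r ≡ 2 mod 3 -/
lemma pow_two_fact {r : ℕ} (hr : 2 ≤ r) : 7 ∣ 2^(2*r-1) - 1 ↔ r % 3 = 2 := by
  set n := 2*r - 1 with hn
  have h1 : (1:ℕ) ≤ 2^n := Nat.one_le_two_pow
  have hmod : 2^n % 7 = 2^(n % 3) % 7 := by
    conv_lhs => rw [← Nat.div_add_mod n 3]
    rw [pow_add, pow_mul, Nat.mul_mod, Nat.pow_mod]
    norm_num
  have hiff : 7 ∣ 2^n - 1 ↔ 2^n % 7 = 1 := by omega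
  rw [hiff, hmod]
  have h3 : r % 3 = 0 ∨ r % 3 = 1 ∨ r % 3 = 2 := by omega
  rcases h3 with h | h | h
  · have : n % 3 = 2 := by omega
    rw [this, h]
    norm_num
  · have : n % 3 = 1 := by omega
    rw [this, h]
    norm_num
  · have : n % 3 = 0 := by omega
    rw [this, h]
    norm_num

end Stmt10Aux
end

/-- Lemma 4.2 of the paper: `7` divides `|bP_{4r}|` iff `3 ∣ r − 2`.
For every integer `r ≥ 2`, with `a_r = 2` if `r` is odd and `a_r = 1` if `r` is even, and
`n_r` the absolute value of the numerator in lowest terms of `B_{2r}/(4r)` (where `B_{2r}`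
is the `(2r)`-th Bernoulli number), the positive integer
`a_r · 2^(2r−2) · (2^(2r−1) − 1) · n_r` is divisible by `7` if and only if
`r ≡ 2 (mod 3)`. -/
theorem stmt_10 (r : ℕ) (hr : 2 ≤ r) :
    (7 ∣ (if Odd r then 2 else 1) * 2 ^ (2 * r - 2) * (2 ^ (2 * r - 1) - 1) *
        (bernoulli (2 * r) / (4 * r : ℚ)).num.natAbs) ↔ r % 3 = 2 := by
  
  have h7p : Nat.Prime 7 := by norm_num
  constructor
  · intro h
    rcases (Nat.Prime.dvd_mul h7p).mp h with h1 | h4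
    · rcases (Nat.Prime.dvd_mul h7p).mp h1 with h2 | h3
      · rcases (Nat.Prime.dvd_mul h7p).mp h2 with ha | hb
        · by_cases hodd : Odd r <;> simp [hodd] at ha <;> omega
        · exact absurd (h7p.dvd_of_dvd_pow hb) (by norm_num)
      · exact (Stmt10Aux.pow_two_fact hr).mp h3
    · exact absurd h4 (Stmt10Aux.num_not_dvd hr)
  · intro h
    have hc : 7 ∣ 2 ^ (2 * r - 1) - 1 := (Stmt10Aux.pow_two_fact hr).mpr h
    exact Dvd.dvd.mul_right (Dvd.dvd.mul_left hc _) _
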